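/- Suppose f : ℝⁿ → ℝ satisfies the Eikonal equation ‖∇f(x)‖ = 1 everywhere (with f differentiable everywhere) and is 1-Lipschitz. Let q₁, q₂ be two distinct points both having the same unique nearest point p' on the zero level set Z = f⁻¹({0}), with f(q₁) < 0 and f(q₂) < 0, |f(x)| = infDist x Z for all x, and q₁, q₂, p' collinear with q₂ strictly between p' and q₁. Then ∇f(q₁) = ∇f(q₂). -/

import Mathlib

/-- For a signed distance function `f` (differentiable, unit gradient, 1-Lipschitz, with
`|f|` the distance to `Z = f⁻¹({0})`), two distinct points `q₁ ≠ q₂` on the negative side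
sharing the same unique nearest point `p' ∈ Z`, with `q₂` strictly between `p'` and `q₁`,
have equal gradients. -/
theorem stmt_9 {n : ℕ} (f : EuclideanSpace ℝ (Fin n) → ℝ)
    (hdiff : Differentiable ℝ f)
    (heik : ∀ x, ‖gradient f x‖ = 1)
    (hlip : LipschitzWith 1 f)
    (Z : Set (EuclideanSpace ℝ (Fin n))) (hZ : Z = f ⁻¹' {0})
    (hsd : ∀ x, |f x| = Metric.infDist x Z)
    (q₁ q₂ p' : EuclideanSpace ℝ (Fin n)) (hq12 : q₁ ≠ q₂) (hp' : p' ∈ Z)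
    (hf1 : f q₁ < 0) (hf2 : f q₂ < 0)
    (hnear1 : ‖q₁ - p'‖ = Metric.infDist q₁ Z)
    (hnear2 : ‖q₂ - p'‖ = Metric.infDist q₂ Z)
    (huniq1 : ∀ p ∈ Z, ‖q₁ - p‖ = Metric.infDist q₁ Z → p = p')
    (huniq2 : ∀ p ∈ Z, ‖q₂ - p‖ = Metric.infDist q₂ Z → p = p')
    (t : ℝ) (ht0 : 0 < t) (ht1 : t < 1) (hcol : q₂ = p' + t • (q₁ - p')) :
    gradient f q₁ = gradient f q₂ := by
  set d : ℝ := ‖q₁ - p'‖ with hd_def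
  have hfp' : f p' = 0 := by
    have := hp'; rw [hZ] at this; exact this
  have hfq1 : f q₁ = -d := by
    have h := hsd q₁
    rw [← hnear1] at h
    rw [abs_of_neg hf1] at h
    linarith
  have hd0 : 0 < d := by linarith
  set u : EuclideanSpace ℝ (Fin n) := d⁻¹ • (q₁ - p') with hu_def
  have hu : ‖u‖ = 1 := by
    rw [hu_def, norm_smul, norm_inv, Real.norm_eq_abs, abs_of_pos hd0]
    field_simp
    exact hd_def.symm
  set γ : ℝ → EuclideanSpace ℝ (Fin n) := fun s => p' + s • u with hγ_def
  have hγd : γ d = q₁ := by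
    simp only [hγ_def, hu_def, smul_smul]
    rw [mul_inv_cancel₀ hd0.ne', one_smul]
    abel
  have hγtd : γ (t * d) = q₂ := by
    simp only [hγ_def, hu_def, smul_smul, hcol]
    rw [mul_assoc, mul_inv_cancel₀ hd0.ne', mul_one]
  set g : ℝ → ℝ := fun s => f (γ s) with hg_def
  have hg0 : g 0 = 0 := by simp [hg_def, hγ_def, hfp']
  have hglip : ∀ s s' : ℝ, |g s - g s'| ≤ |s - s'| := by
    intro s s'
    have := hlip.dist_le_mul (γ s) (γ s')
    simpa [hg_def, hγ_def, Real.dist_eq, dist_eq_norm, add_sub_add_left_eq_sub,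
      ← sub_smul, norm_smul, hu, mul_one] using this
  have heq : ∀ s ∈ Set.Icc (0 : ℝ) d, g s = -s := by
    intro s hs
    obtain ⟨hs0, hsd⟩ := hs
    have h1 : |g s - g 0| ≤ |s - 0| := hglip s 0
    have h2 : |g d - g s| ≤ |d - s| := hglip d s
    have hgd : g d = -d := by rw [hg_def]; simp only [hγd]; exact hfq1
    rw [hg0, sub_zero, sub_zero, abs_of_nonneg hs0] at h1
    rw [hgd, abs_of_nonneg (by linarith : (0:ℝ) ≤ d - s)] at h2
    have h1' := abs_le.1 h1
    have h2' := abs_le.1 h2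
    linarith [h1'.1, h1'.2, h2'.1, h2'.2]
  have hinner : ∀ x, (inner ℝ (gradient f x) u : ℝ) = fderiv ℝ f x u := by
    intro x
    rw [← InnerProductSpace.toDual_apply_apply, gradient,
      LinearIsometryEquiv.apply_symm_apply]
  have key : ∀ s ∈ Set.Icc (0 : ℝ) d, gradient f (γ s) = -u := by
    intro s hs
    have hγ' : HasDerivAt γ u s := by
      simpa [hγ_def] using ((hasDerivAt_id s).smul_const u).const_add p'
    have hg' : HasDerivAt g (fderiv ℝ f (γ s) u) s :=
      (hdiff (γ s)).hasFDerivAt.comp_hasDerivAt s hγ'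
    have hgW : HasDerivWithinAt g (fderiv ℝ f (γ s) u) (Set.Icc 0 d) s :=
      hg'.hasDerivWithinAt
    have hlin : HasDerivWithinAt (fun r : ℝ => -r) (-1) (Set.Icc 0 d) s :=
      (hasDerivAt_neg s).hasDerivWithinAt
    have hgW2 : HasDerivWithinAt g (-1) (Set.Icc 0 d) s :=
      hlin.congr heq (heq s hs)
    have hud : UniqueDiffWithinAt ℝ (Set.Icc (0:ℝ) d) s := uniqueDiffOn_Icc hd0 s hs
    have hfd : fderiv ℝ f (γ s) u = -1 := by
      rw [← hgW.derivWithin hud, ← hgW2.derivWithin hud]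
    have hip : (inner ℝ (gradient f (γ s)) u : ℝ) = -1 := by rw [hinner, hfd]
    have hnorm : ‖gradient f (γ s) + u‖ ^ 2 = 0 := by
      rw [norm_add_sq_real, heik, hu, hip]; ring
    have : gradient f (γ s) + u = 0 := by
      have := pow_eq_zero_iff (n := 2) (by norm_num) |>.1 hnorm
      exact norm_eq_zero.1 this
    exact eq_neg_of_add_eq_zero_left this
  have k1 : gradient f q₁ = -u := by
    rw [← hγd]; exact key d ⟨hd0.le, le_refl d⟩
  have k2 : gradient f q₂ = -u := by
    rw [← hγtd]
    exact key (t * d) ⟨by positivity, by nlinarith⟩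
  rw [k1, k2]
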